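/- Let X be a nonnegative absolutely continuous random variable with cumulative distribution function F and support (0,l), where either 0 < l < +∞, or l = +∞ and lim_{x→+∞} x [−ln F(x)]^α = 0 for each relevant α. Under the proportional reversed hazard model F_{X_θ}(x) = [F(x)]^θ, θ > 0, and with ℰ_θ(α) := (1/Γ(α)) E[ X_θ (−ln F_{X_θ}(X_θ))^{α−1} ], the recurrence CE_{α+1}(X_θ) = ℰ_θ(α) − ℰ_θ(α+2) − CE_α(X_θ) holds for all α > 0. -/

import Mathlib

open MeasureTheory Set
open scoped ENNReal
open scoped ProbabilityTheory

open MeasureTheory Set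
open scoped ENNReal

lemma expneg_hasDerivAt (x : ℝ) : HasDerivAt (fun t : ℝ => Real.exp (-t)) (-Real.exp (-x)) x := by
  simpa [mul_comm, Function.comp_def] using (Real.hasDerivAt_exp (-x)).comp x (hasDerivAt_neg x)

lemma neglog_integrable {γ : ℝ} (hγ : -1 < γ) :
    IntegrableOn (fun u : ℝ => (-Real.log u) ^ γ) (Ioc 0 1) := by
  rw [integrableOn_Ioc_iff_integrableOn_Ioo]
  have himg : (fun t : ℝ => Real.exp (-t)) '' (Ioi 0) = Ioo 0 1 := by
    ext u
    constructor
    · rintro ⟨t, ht, rfl⟩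
      exact ⟨Real.exp_pos _, Real.exp_lt_one_iff.mpr (by simpa using ht)⟩
    · rintro ⟨h0, h1⟩
      exact ⟨-Real.log u, by simpa using Real.log_neg h0 h1, by
        simp [Real.exp_log h0]⟩
  rw [← himg, integrableOn_image_iff_integrableOn_abs_deriv_smul measurableSet_Ioi
    (f' := fun t => -Real.exp (-t))
    (fun x _ => (expneg_hasDerivAt x).hasDerivWithinAt)
    (fun a _ b _ h => by simpa using Real.exp_injective h)]
  have := Real.GammaIntegral_convergent (by linarith : (0:ℝ) < γ + 1)
  refine (this.congr_fun ?_ measurableSet_Ioi)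
  intro x hx
  simp [Real.log_exp, abs_of_pos (Real.exp_pos (-x)), smul_eq_mul, add_sub_cancel_right]

lemma ftc_key {β v : ℝ} (hβ : 0 < β) (hv0 : 0 < v) (hv1 : v < 1) :
    ∫ u in Ioc v 1, (β * (-Real.log u) ^ (β - 1) - (-Real.log u) ^ β)
      = v * (-Real.log v) ^ β := by
  have hint : IntegrableOn (fun u : ℝ => (-Real.log u) ^ β - β * (-Real.log u) ^ (β - 1))
      (Ioc v 1) := by
    refine (((neglog_integrable (by linarith)).mono_set
      (Ioc_subset_Ioc_left hv0.le)).sub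
      (((neglog_integrable (by linarith)).mono_set
        (Ioc_subset_Ioc_left hv0.le)).const_mul β))
  have hderiv : ∀ u ∈ Ioo v 1, HasDerivAt (fun u : ℝ => u * (-Real.log u) ^ β)
      ((-Real.log u) ^ β - β * (-Real.log u) ^ (β - 1)) u := by
    intro u hu
    have hu0 : (0:ℝ) < u := lt_trans hv0 hu.1
    have hlog : 0 < -Real.log u := by simpa using Real.log_neg hu0 hu.2
    have h1 : HasDerivAt (fun u : ℝ => -Real.log u) (-u⁻¹) u :=
      (Real.hasDerivAt_log (ne_of_gt hu0)).neg
    have h2 : HasDerivAt (fun y : ℝ => y ^ β) (β * (-Real.log u) ^ (β - 1)) (-Real.log u) :=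
      Real.hasDerivAt_rpow_const (Or.inl (ne_of_gt hlog))
    have h3 := (h2.comp u h1)
    have h4 := (hasDerivAt_id u).mul h3
    refine h4.congr_deriv ?_
    show 1 * (-Real.log u) ^ β + u * (β * (-Real.log u) ^ (β - 1) * -u⁻¹)
      = (-Real.log u) ^ β - β * (-Real.log u) ^ (β - 1)
    field_simp
    ring
  have hcont : ContinuousOn (fun u : ℝ => u * (-Real.log u) ^ β) (Icc v 1) := by
    refine ContinuousOn.mul (continuousOn_id) ?_
    refine ContinuousOn.rpow_const ?_ (fun x hx => Or.inr hβ.le)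
    exact (Real.continuousOn_log.mono (fun x hx => ne_of_gt (lt_of_lt_of_le hv0 hx.1))).neg
  have heq := intervalIntegral.integral_eq_sub_of_hasDeriv_right_of_le hv1.le hcont
    (fun u hu => (hderiv u hu).hasDerivWithinAt)
    ((intervalIntegrable_iff_integrableOn_Ioc_of_le hv1.le).mpr hint)
  rw [intervalIntegral.integral_of_le hv1.le] at heq
  have : ∫ u in Ioc v 1, (β * (-Real.log u) ^ (β - 1) - (-Real.log u) ^ β)
      = -∫ u in Ioc v 1, ((-Real.log u) ^ β - β * (-Real.log u) ^ (β - 1)) := by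
    rw [← integral_neg]
    congr 1
    ext u
    ring
  rw [this, heq]
  have hlogv : 0 < -Real.log v := by simpa using Real.log_neg hv0 hv1
  simp [Real.log_one, Real.zero_rpow (ne_of_gt hβ)]

lemma measurable_rpow_const_of_nonneg {b : ℝ → ℝ} (hb : Measurable b)
    (hb0 : ∀ y, 0 ≤ b y) (c : ℝ) : Measurable fun y => b y ^ c := by
  have hEq : (fun y => b y ^ c)
      = fun y => if b y = 0 then (if c = 0 then (1:ℝ) else 0)
          else Real.exp (Real.log (b y) * c) := by
    ext y
    rcases eq_or_ne (b y) 0 with h | h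
    · rw [if_pos h, h]
      rcases eq_or_ne c 0 with hc | hc
      · simp [hc]
      · simp [Real.zero_rpow hc, hc]
    · rw [if_neg h, Real.rpow_def_of_pos (lt_of_le_of_ne (hb0 y) (Ne.symm h))]
  rw [hEq]
  exact Measurable.ite (hb (measurableSet_singleton 0)) measurable_const
    ((hb.log.mul_const c).exp)

lemma measurable_rpow_const' (c : ℝ) : Measurable fun x : ℝ => x ^ c := by
  have hEq : (fun x : ℝ => x ^ c)
      = fun x => if x = 0 then (if c = 0 then (1:ℝ) else 0)
          else if x < 0 then Real.exp (Real.log x * c) * Real.cos (c * Real.pi)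
          else Real.exp (Real.log x * c) := by
    ext x
    rcases lt_trichotomy x 0 with h | h | h
    · rw [if_neg (ne_of_lt h), if_pos h, Real.rpow_def_of_neg h]
    · rw [if_pos h, h]
      rcases eq_or_ne c 0 with hc | hc
      · simp [hc]
      · simp [Real.zero_rpow hc, hc]
    · rw [if_neg (ne_of_gt h), if_neg (not_lt.mpr h.le), Real.rpow_def_of_pos h]
  rw [hEq]
  refine Measurable.ite (measurableSet_singleton 0) measurable_const ?_
  exact Measurable.ite (measurableSet_lt measurable_id measurable_const)
    ((Real.measurable_log.mul_const c).exp.mul_const _) ((Real.measurable_log.mul_const c).exp)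

lemma lint_ne_top_of_integrable {ν : Measure ℝ} {g : ℝ → ℝ} (hg : Integrable g ν) :
    ∫⁻ y, ENNReal.ofReal (g y) ∂ν ≠ ⊤ := by
  have := hg.hasFiniteIntegral
  rw [hasFiniteIntegral_iff_norm] at this
  refine ne_of_lt (lt_of_le_of_lt (lintegral_mono (fun y => ?_)) this)
  exact ENNReal.ofReal_le_ofReal (le_abs_self _)

section Key
variable {G : ℝ → ℝ} {μ : Measure ℝ} {S : Set ℝ}

lemma fubini_T [IsFiniteMeasure μ] (hSm : MeasurableSet S) (hGmeas : Measurable G)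
    (hG01 : ∀ y, 0 ≤ G y ∧ G y ≤ 1)
    (hμae : ∀ᵐ y ∂μ, y ∈ S)
    (hSIio : ∀ y ∈ S, S ∩ Iio y = Ioo 0 y)
    (hS0 : ∀ y ∈ S, 0 < y)
    {γ : ℝ}
    (M : Integrable (fun y => y * (-Real.log (G y)) ^ γ) μ)
    (qfin : ∫⁻ y, ENNReal.ofReal ((-Real.log (G y)) ^ γ) ∂μ ≠ ⊤) :
    Integrable (fun x => ∫ y in Ioi x, (-Real.log (G y)) ^ γ ∂μ) (volume.restrict S) ∧
    (∫ x in S, (∫ y in Ioi x, (-Real.log (G y)) ^ γ ∂μ))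
      = ∫ y, y * (-Real.log (G y)) ^ γ ∂μ := by
  set q : ℝ → ℝ := fun y => (-Real.log (G y)) ^ γ with hq
  have hqnn : ∀ y, 0 ≤ q y := fun y => Real.rpow_nonneg
    (by simpa using Real.log_nonpos (hG01 y).1 (hG01 y).2) _
  have hqmeas : Measurable q :=
    measurable_rpow_const_of_nonneg (hGmeas.log.neg)
      (fun y => by simpa using Real.log_nonpos (hG01 y).1 (hG01 y).2) γ
  set Q : ℝ → ℝ≥0∞ := fun y => ENNReal.ofReal (q y) with hQ
  have hQmeas : Measurable Q := hqmeas.ennreal_ofReal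
  set inner : ℝ → ℝ≥0∞ := fun x => ∫⁻ y in Ioi x, Q y ∂μ with hinner
  have hfact1 : ∀ x : ℝ, (∫ y in Ioi x, q y ∂μ) = (inner x).toReal := by
    intro x
    rw [integral_eq_lintegral_of_nonneg_ae (Filter.Eventually.of_forall (fun y => hqnn y))
      hqmeas.aestronglyMeasurable.restrict]
  have hinner_anti : Antitone inner := by
    intro a b hab
    exact lintegral_mono_set (Ioi_subset_Ioi hab)
  have hinner_meas : Measurable inner := hinner_anti.measurable
  -- swap
  have hswap : (∫⁻ x in S, inner x) = ∫⁻ y, ENNReal.ofReal (y * q y) ∂μ := by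
    have h1 : (∫⁻ x in S, inner x)
        = ∫⁻ x in S, ∫⁻ y, (if x < y then Q y else 0) ∂μ := by
      refine lintegral_congr fun x => ?_
      show (∫⁻ y in Ioi x, Q y ∂μ) = _
      rw [← lintegral_indicator measurableSet_Ioi]
      refine lintegral_congr fun y => ?_
      simp [Set.indicator, Ioi, lt_iff_lt_of_le_iff_le]
      congr
    have h2 : (∫⁻ x in S, ∫⁻ y, (if x < y then Q y else 0) ∂μ)
        = ∫⁻ y, (∫⁻ x in S, (if x < y then Q y else 0)) ∂μ := by
      refine lintegral_lintegral_swap (μ := volume.restrict S) (ν := μ)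
        (f := fun x y => if x < y then Q y else 0) ?_
      refine Measurable.aemeasurable ?_
      refine Measurable.ite ?_ (hQmeas.comp measurable_snd) measurable_const
      exact measurableSet_lt measurable_fst measurable_snd
    have h3 : ∀ᵐ y ∂μ, (∫⁻ x in S, (if x < y then Q y else 0)) = ENNReal.ofReal (y * q y) := by
      filter_upwards [hμae] with y hy
      have : (fun x => if x < y then Q y else 0) = (Iio y).indicator (fun _ => Q y) := by
        ext x; simp [Set.indicator, Iio]
        congr
      rw [this, lintegral_indicator measurableSet_Iio, setLIntegral_const,
        Measure.restrict_apply measurableSet_Iio, Set.inter_comm, hSIio y hy,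
        Real.volume_Ioo, ENNReal.ofReal_mul (hS0 y hy).le]
      · simp [hQ, mul_comm, sub_zero]
    rw [h1, h2, lintegral_congr_ae h3]
  have hfin : (∫⁻ x in S, inner x) ≠ ⊤ := by
    rw [hswap]
    have := M.hasFiniteIntegral
    rw [hasFiniteIntegral_iff_norm] at this
    refine ne_of_lt (lt_of_le_of_lt (lintegral_mono (fun y => ?_)) this)
    exact ENNReal.ofReal_le_ofReal (le_abs_self _)
  constructor
  · have : (fun x => ∫ y in Ioi x, q y ∂μ) = fun x => (inner x).toReal := funext hfact1
    rw [this]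
    exact integrable_toReal_of_lintegral_ne_top hinner_meas.aemeasurable.restrict hfin
  calc (∫ x in S, (∫ y in Ioi x, q y ∂μ))
      = ∫ x in S, (inner x).toReal := by
        exact integral_congr_ae (Filter.Eventually.of_forall (fun x => hfact1 x))
    _ = (∫⁻ x in S, inner x).toReal := by
        refine integral_toReal hinner_meas.aemeasurable.restrict ?_
        refine Filter.Eventually.of_forall (fun x => ?_)
        refine lt_of_le_of_lt (setLIntegral_le_lintegral _ _) ?_
        exact lt_of_le_of_ne le_top qfin
    _ = (∫⁻ y, ENNReal.ofReal (y * q y) ∂μ).toReal := by rw [hswap]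
    _ = ∫ y, y * q y ∂μ := by
        rw [integral_eq_lintegral_of_nonneg_ae ?_ ?_]
        · filter_upwards [hμae] with y hy
          exact mul_nonneg (hS0 y hy).le (hqnn y)
        · exact (measurable_id.mul hqmeas).aestronglyMeasurable

end Key

lemma key_identity [IsProbabilityMeasure μ] (hSm : MeasurableSet S) (hGmeas : Measurable G)
    (hG01 : ∀ y, 0 ≤ G y ∧ G y ≤ 1)
    (hGx : ∀ x ∈ S, 0 < G x ∧ G x < 1)
    (hlevel : ∀ x ∈ S, ∀ y, x < y ↔ G x < G y)
    (hμae : ∀ᵐ y ∂μ, y ∈ S)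
    (hSIio : ∀ y ∈ S, S ∩ Iio y = Ioo 0 y)
    (hS0 : ∀ y ∈ S, 0 < y)
    (hmap : Measure.map G μ = (volume : Measure ℝ).restrict (Ioc 0 1))
    {β : ℝ} (hβ : 0 < β)
    (M1 : Integrable (fun y => y * (-Real.log (G y)) ^ (β - 1)) μ)
    (M2 : Integrable (fun y => y * (-Real.log (G y)) ^ β) μ) :
    (∫ x in S, G x * (-Real.log (G x)) ^ β)
      = β * (∫ y, y * (-Real.log (G y)) ^ (β - 1) ∂μ)
        - ∫ y, y * (-Real.log (G y)) ^ β ∂μ := by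
  have hqmeas : ∀ γ : ℝ, Measurable (fun y => (-Real.log (G y)) ^ γ) :=
    fun γ => (measurable_rpow_const' γ).comp (hGmeas.log.neg)
  have hhmeas : ∀ γ : ℝ, Measurable (fun u : ℝ => (-Real.log u) ^ γ) :=
    fun γ => (measurable_rpow_const' γ).comp (Real.measurable_log.neg)
  have qint : ∀ γ : ℝ, -1 < γ → Integrable (fun y => (-Real.log (G y)) ^ γ) μ := by
    intro γ hγ
    have h1 : Integrable (fun u : ℝ => (-Real.log u) ^ γ) (Measure.map G μ) := by
      rw [hmap]; exact neglog_integrable hγ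
    exact (integrable_map_measure (hhmeas γ).aestronglyMeasurable
      hGmeas.aemeasurable).mp h1
  have setpush : ∀ γ : ℝ, ∀ x ∈ S,
      (∫ y in Ioi x, (-Real.log (G y)) ^ γ ∂μ)
        = ∫ u in Ioc (G x) 1, (-Real.log u) ^ γ := by
    intro γ x hx
    have hGx1 := (hGx x hx).1
    have hGx2 := (hGx x hx).2
    have hind : (Ioi x).indicator (fun y => (-Real.log (G y)) ^ γ)
        = fun y => (Ioi (G x)).indicator (fun u => (-Real.log u) ^ γ) (G y) := by
      ext y
      simp only [Set.indicator_apply, mem_Ioi]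
      rw [if_congr (hlevel x hx y) rfl rfl]
    have hseteq : Ioi (G x) ∩ Ioc (0:ℝ) 1 = Ioc (G x) 1 := by
      ext u
      constructor
      · rintro ⟨h1, _, h3⟩; exact ⟨h1, h3⟩
      · rintro ⟨h1, h2⟩; exact ⟨h1, lt_trans hGx1 h1, h2⟩
    calc (∫ y in Ioi x, (-Real.log (G y)) ^ γ ∂μ)
        = ∫ y, (Ioi x).indicator (fun y => (-Real.log (G y)) ^ γ) y ∂μ := by
          rw [integral_indicator measurableSet_Ioi]
      _ = ∫ y, (Ioi (G x)).indicator (fun u => (-Real.log u) ^ γ) (G y) ∂μ := by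
          rw [hind]
      _ = ∫ u, (Ioi (G x)).indicator (fun u => (-Real.log u) ^ γ) u ∂(Measure.map G μ) := by
          rw [integral_map hGmeas.aemeasurable
            (((hhmeas γ).indicator measurableSet_Ioi).aestronglyMeasurable)]
      _ = ∫ u in Ioc (G x) 1, (-Real.log u) ^ γ := by
          rw [hmap, integral_indicator measurableSet_Ioi,
            Measure.restrict_restrict measurableSet_Ioi, hseteq]
  have hsub1 : ∀ v : ℝ, 0 < v → IntegrableOn (fun u : ℝ => (-Real.log u) ^ (β - 1))
      (Ioc v 1) := fun v hv =>
    (neglog_integrable (by linarith)).mono_set (Ioc_subset_Ioc_left hv.le)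
  have hsub2 : ∀ v : ℝ, 0 < v → IntegrableOn (fun u : ℝ => (-Real.log u) ^ β)
      (Ioc v 1) := fun v hv =>
    (neglog_integrable (by linarith)).mono_set (Ioc_subset_Ioc_left hv.le)
  have pointwise : ∀ x ∈ S, G x * (-Real.log (G x)) ^ β
      = β * (∫ y in Ioi x, (-Real.log (G y)) ^ (β - 1) ∂μ)
        - ∫ y in Ioi x, (-Real.log (G y)) ^ β ∂μ := by
    intro x hx
    rw [setpush _ x hx, setpush _ x hx,
      ← ftc_key hβ (hGx x hx).1 (hGx x hx).2, ← integral_const_mul,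
      ← integral_sub (((hsub1 _ (hGx x hx).1).const_mul β)) (hsub2 _ (hGx x hx).1)]
  have fub1 := fubini_T (γ := β - 1) hSm hGmeas hG01 hμae hSIio hS0 M1
    (lint_ne_top_of_integrable (qint _ (by linarith)))
  have fub2 := fubini_T (γ := β) hSm hGmeas hG01 hμae hSIio hS0 M2
    (lint_ne_top_of_integrable (qint _ (by linarith)))
  calc (∫ x in S, G x * (-Real.log (G x)) ^ β)
      = ∫ x in S, (β * (∫ y in Ioi x, (-Real.log (G y)) ^ (β - 1) ∂μ)
          - ∫ y in Ioi x, (-Real.log (G y)) ^ β ∂μ) := by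
        exact setIntegral_congr_fun hSm pointwise
    _ = β * (∫ x in S, (∫ y in Ioi x, (-Real.log (G y)) ^ (β - 1) ∂μ))
          - ∫ x in S, (∫ y in Ioi x, (-Real.log (G y)) ^ β ∂μ) := by
        rw [integral_sub (fub1.1.const_mul β) fub2.1, integral_const_mul]
    _ = β * (∫ y, y * (-Real.log (G y)) ^ (β - 1) ∂μ)
          - ∫ y, y * (-Real.log (G y)) ^ β ∂μ := by
        rw [fub1.2, fub2.2]

section FStuff
variable {F f : ℝ → ℝ} {l : EReal}

lemma F_basics
    (hl : (∃ lr : ℝ, 0 < lr ∧ l = (lr : EReal)) ∨ l = ⊤)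
    (hf_meas : Measurable f) (hf_nonneg : ∀ x, 0 ≤ f x)
    (hf_pos : ∀ x : ℝ, 0 < x → (x : EReal) < l → 0 < f x)
    (hf_supp : ∀ x : ℝ, ¬ (0 < x ∧ (x : EReal) < l) → f x = 0)
    (hf_prob : ∫ x, f x = 1)
    (hF : ∀ x, F x = ∫ t in Set.Iio x, f t) :
    Integrable f ∧ Monotone F ∧ (∀ x ≤ 0, F x = 0) ∧ (∀ x, 0 ≤ F x ∧ F x ≤ 1)
      ∧ Continuous F := by
  have hf_int : Integrable f := by
    by_contra h
    rw [integral_undef h] at hf_prob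
    norm_num at hf_prob
  refine ⟨hf_int, ?_, ?_, ?_, ?_⟩
  · intro a b hab
    rw [hF a, hF b]
    exact setIntegral_mono_set hf_int.integrableOn
      (Filter.Eventually.of_forall fun t => hf_nonneg t)
      (HasSubset.Subset.eventuallyLE (Iio_subset_Iio hab))
  · intro x hx
    rw [hF x]
    refine setIntegral_eq_zero_of_forall_eq_zero fun t ht => ?_
    exact hf_supp t (fun hc => absurd (lt_of_lt_of_le ht hx) (not_lt.mpr hc.1.le))
  · intro x
    constructor
    · rw [hF x]; exact setIntegral_nonneg measurableSet_Iio fun t _ => hf_nonneg t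
    · rw [hF x, ← hf_prob]
      exact setIntegral_le_integral hf_int
        (Filter.Eventually.of_forall fun t => hf_nonneg t)
  · have hzero : ∀ x ≤ 0, F x = 0 := by
      intro x hx
      rw [hF x]
      refine setIntegral_eq_zero_of_forall_eq_zero fun t ht => ?_
      exact hf_supp t (fun hc => absurd (lt_of_lt_of_le ht hx) (not_lt.mpr hc.1.le))
    have hprim : ∀ x, F x = ∫ t in (0:ℝ)..x, f t := by
      intro x
      rcases le_or_gt 0 x with h | h
      · rw [intervalIntegral.integral_of_le h, hF x]
        have hunion : Iio (0:ℝ) ∪ Ico 0 x = Iio x := Iio_union_Ico_eq_Iio h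
        have hdisj : Disjoint (Iio (0:ℝ)) (Ico 0 x) :=
          disjoint_left.mpr (fun t ht ht' => absurd ht'.1 (not_le.mpr ht))
        rw [← hunion, setIntegral_union hdisj measurableSet_Ico
          hf_int.integrableOn hf_int.integrableOn]
        have h0 : ∫ t in Iio (0:ℝ), f t = 0 := by
          refine setIntegral_eq_zero_of_forall_eq_zero fun t ht => ?_
          exact hf_supp t (fun hc => absurd ht (not_lt.mpr hc.1.le))
        rw [h0, zero_add, integral_Ico_eq_integral_Ioo, integral_Ioc_eq_integral_Ioo]
      · rw [intervalIntegral.integral_of_ge h.le, hzero x h.le]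
        have : ∫ t in Ioc x 0, f t = 0 := by
          refine setIntegral_eq_zero_of_forall_eq_zero fun t ht => ?_
          exact hf_supp t (fun hc => absurd (lt_of_lt_of_le hc.1 ht.2) (lt_irrefl 0))
        rw [this, neg_zero]
    have : F = fun x => ∫ t in (0:ℝ)..x, f t := funext hprim
    rw [this]
    exact intervalIntegral.continuous_primitive
      (fun a b => hf_int.intervalIntegrable) 0

lemma F_pos_block
    (hl : (∃ lr : ℝ, 0 < lr ∧ l = (lr : EReal)) ∨ l = ⊤)
    (hf_int : Integrable f) (hf_nonneg : ∀ x, 0 ≤ f x)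
    (hf_pos : ∀ x : ℝ, 0 < x → (x : EReal) < l → 0 < f x)
    (hf_supp : ∀ x : ℝ, ¬ (0 < x ∧ (x : EReal) < l) → f x = 0)
    (hf_prob : ∫ x, f x = 1)
    (hF : ∀ x, F x = ∫ t in Set.Iio x, f t)
    (hFmono : Monotone F) (hF0 : ∀ x ≤ 0, F x = 0) :
    (∀ x, 0 < x → 0 < F x) ∧ (∀ x : ℝ, (x : EReal) < l → F x < 1)
      ∧ (∀ x y : ℝ, 0 ≤ x → x < y → (y : EReal) ≤ l → F x < F y)
      ∧ (∀ lr : ℝ, l = (lr : EReal) → ∀ x : ℝ, lr ≤ x → F x = 1) := by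
  have hposint : ∀ a b : ℝ, 0 ≤ a → a < b → (b : EReal) ≤ l → 0 < ∫ t in Ioo a b, f t := by
    intro a b ha hab hbl
    rw [setIntegral_pos_iff_support_of_nonneg_ae
      (Filter.Eventually.of_forall fun t => hf_nonneg t) hf_int.integrableOn]
    have hsub : Ioo a b ⊆ Function.support f := by
      intro t ht
      have htl : (t : EReal) < l := lt_of_lt_of_le (EReal.coe_lt_coe_iff.mpr ht.2) hbl
      exact ne_of_gt (hf_pos t (lt_of_le_of_lt ha ht.1) htl)
    rw [Set.inter_eq_right.mpr hsub, Real.volume_Ioo]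
    simp [sub_pos.mpr hab]
  have hstrict : ∀ x y : ℝ, 0 ≤ x → x < y → (y : EReal) ≤ l → F x < F y := by
    intro x y hx hxy hyl
    have hkey : F y = F x + ∫ t in Ico x y, f t := by
      have hu := setIntegral_union (μ := volume) (f := f) (s := Iio x) (t := Ico x y)
        (disjoint_left.mpr (fun t ht ht' => absurd ht'.1 (not_le.mpr ht)))
        measurableSet_Ico hf_int.integrableOn hf_int.integrableOn
      rw [Iio_union_Ico_eq_Iio hxy.le] at hu
      rw [hF x, hF y, hu]
    rw [hkey, integral_Ico_eq_integral_Ioo]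
    linarith [hposint x y hx hxy hyl]
  refine ⟨?_, ?_, hstrict, ?_⟩
  · intro x hx
    rcases hl with ⟨lr, hlr, rfl⟩ | rfl
    · rcases lt_or_ge x lr with h | h
      · have := hstrict 0 x le_rfl hx (le_of_lt (EReal.coe_lt_coe_iff.mpr h))
        rwa [hF0 0 le_rfl] at this
      · have h2 := hstrict 0 (lr/2) le_rfl (by linarith)
          (le_of_lt (EReal.coe_lt_coe_iff.mpr (by linarith)))
        rw [hF0 0 le_rfl] at h2
        exact lt_of_lt_of_le h2 (hFmono (by linarith))
    · have := hstrict 0 x le_rfl hx le_top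
      rwa [hF0 0 le_rfl] at this
  · intro x hxl
    -- 1 - F x ≥ ∫ over an interval above x
    set m : ℝ := max x 0 with hm
    have hml : (m : EReal) < l := by
      rcases hl with ⟨lr, hlr, rfl⟩ | rfl
      · rw [EReal.coe_lt_coe_iff] at hxl ⊢
        exact max_lt hxl hlr
      · exact EReal.coe_lt_top m
    obtain ⟨b, hmb, hbl⟩ : ∃ b : ℝ, m < b ∧ (b : EReal) ≤ l := by
      rcases hl with ⟨lr, hlr, rfl⟩ | rfl
      · exact ⟨lr, EReal.coe_lt_coe_iff.mp hml, le_rfl⟩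
      · exact ⟨m + 1, lt_add_one m, le_top⟩
    have hpos := hposint m b (le_max_right x 0) hmb hbl
    have hsum : F x + ∫ t in Ioo m b, f t ≤ 1 := by
      rw [hF x, ← hf_prob]
      rw [← setIntegral_union ?_ measurableSet_Ioo hf_int.integrableOn hf_int.integrableOn]
      · exact setIntegral_le_integral hf_int
          (Filter.Eventually.of_forall fun t => hf_nonneg t)
      · refine disjoint_left.mpr (fun t ht ht' => ?_)
        exact absurd (lt_of_le_of_lt (le_max_left x 0) ht'.1) (not_lt.mpr ht.le)
    linarith
  · intro lr hlf x hx
    have h1 : ∫ t in Iio x, f t = ∫ t, f t := by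
      refine setIntegral_eq_integral_of_forall_compl_eq_zero fun t ht => ?_
      refine hf_supp t (fun hc => ?_)
      rw [hlf] at hc
      have := EReal.coe_lt_coe_iff.mp hc.2
      simp only [mem_Iio, not_lt] at ht
      linarith
    rw [hF x, h1, hf_prob]

lemma F_surj_block
    (hl : (∃ lr : ℝ, 0 < lr ∧ l = (lr : EReal)) ∨ l = ⊤)
    (hf_int : Integrable f) (hf_nonneg : ∀ x, 0 ≤ f x)
    (hf_prob : ∫ x, f x = 1)
    (hF : ∀ x, F x = ∫ t in Set.Iio x, f t)
    (hFcont : Continuous F) (hF0 : ∀ x ≤ 0, F x = 0)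
    (hF1 : ∀ lr : ℝ, l = (lr : EReal) → ∀ x : ℝ, lr ≤ x → F x = 1) :
    ∀ s : ℝ, 0 < s → s < 1 → ∃ c : ℝ, 0 < c ∧ (c : EReal) < l ∧ F c = s := by
  have hbig : l = ⊤ → ∀ s : ℝ, s < 1 → ∃ b : ℝ, 0 < b ∧ s < F b := by
    intro hltop s hs
    have htend : Filter.Tendsto (fun n : ℕ => ∫ t in Iio (n : ℝ), f t)
        Filter.atTop (nhds (∫ t, f t)) := by
      have hU : ⋃ n : ℕ, Iio (n : ℝ) = univ := by
        ext t
        simp only [mem_iUnion, mem_Iio, mem_univ, iff_true]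
        obtain ⟨n, hn⟩ := exists_nat_gt t
        exact ⟨n, hn⟩
      have := MeasureTheory.tendsto_setIntegral_of_monotone
        (s := fun n : ℕ => Iio (n : ℝ)) (f := f) (μ := volume)
        (fun n => measurableSet_Iio)
        (fun a b hab => Iio_subset_Iio (by exact_mod_cast hab))
        (by rw [hU]; exact hf_int.integrableOn)
      rwa [hU, setIntegral_univ] at this
    rw [hf_prob] at htend
    have hev : ∀ᶠ n : ℕ in Filter.atTop, s < ∫ t in Iio (n : ℝ), f t :=
      htend.eventually_const_lt hs
    obtain ⟨n, hn⟩ := hev.exists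
    refine ⟨max (n : ℝ) 1, lt_of_lt_of_le zero_lt_one (le_max_right _ _), ?_⟩
    calc s < ∫ t in Iio (n : ℝ), f t := hn
      _ = F (n : ℝ) := (hF _).symm
      _ ≤ F (max (n : ℝ) 1) := by
          rw [hF _, hF _]
          exact setIntegral_mono_set hf_int.integrableOn
            (Filter.Eventually.of_forall fun t => hf_nonneg t)
            (HasSubset.Subset.eventuallyLE (Iio_subset_Iio (le_max_left _ _)))
  intro s hs0 hs1
  rcases hl with ⟨lr, hlr, rfl⟩ | rfl
  · have hivt := intermediate_value_Ioo (le_of_lt hlr) hFcont.continuousOn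
    rw [hF0 0 le_rfl, hF1 lr rfl lr le_rfl] at hivt
    obtain ⟨c, hc, hFc⟩ := hivt ⟨hs0, hs1⟩
    exact ⟨c, hc.1, EReal.coe_lt_coe_iff.mpr hc.2, hFc⟩
  · obtain ⟨b, hb0, hsb⟩ := hbig rfl s hs1
    have hivt := intermediate_value_Ioo (le_of_lt hb0) hFcont.continuousOn
    rw [hF0 0 le_rfl] at hivt
    obtain ⟨c, hc, hFc⟩ := hivt ⟨hs0, hsb⟩
    exact ⟨c, hc.1, EReal.coe_lt_top c, hFc⟩
end FStuff

lemma map_G_eq (G : ℝ → ℝ) (μ : Measure ℝ) [IsProbabilityMeasure μ]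
    (hGmeas : Measurable G) (hGmono : Monotone G)
    (hG0 : G 0 = 0) (hGpos : ∀ y : ℝ, 0 < y → 0 < G y)
    (hG01 : ∀ y, 0 ≤ G y ∧ G y ≤ 1)
    (hμIic : ∀ x, μ (Iic x) = ENNReal.ofReal (G x))
    (hexists : ∀ u : ℝ, 0 < u → u < 1 →
      ∃ c : ℝ, 0 < c ∧ G c = u ∧ (∀ y, c < y → u < G y)) :
    Measure.map G μ = (volume : Measure ℝ).restrict (Ioc 0 1) := by
  haveI : IsProbabilityMeasure (Measure.map G μ) :=
    Measure.isProbabilityMeasure_map hGmeas.aemeasurable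
  refine Measure.ext_of_Iic (Measure.map G μ) _ (fun u => ?_)
  rw [Measure.map_apply hGmeas measurableSet_Iic,
    Measure.restrict_apply measurableSet_Iic]
  rcases lt_or_ge u 0 with hu | hu
  · have h1 : G ⁻¹' Iic u = ∅ := by
      ext y
      simp only [mem_preimage, mem_Iic, mem_empty_iff_false, iff_false, not_le]
      exact lt_of_lt_of_le hu (hG01 y).1
    have h2 : Iic u ∩ Ioc (0:ℝ) 1 = ∅ := by
      ext y
      simp only [mem_inter_iff, mem_Iic, mem_Ioc, mem_empty_iff_false, iff_false]
      rintro ⟨h3, h4, -⟩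
      linarith
    rw [h1, h2]
    simp
  rcases le_or_gt 1 u with hu1 | hu1
  · have h1 : G ⁻¹' Iic u = univ := by
      ext y
      simp only [mem_preimage, mem_Iic, mem_univ, iff_true]
      exact le_trans (hG01 y).2 hu1
    have h2 : Iic u ∩ Ioc (0:ℝ) 1 = Ioc 0 1 := by
      refine inter_eq_right.mpr (fun y hy => le_trans hy.2 hu1)
    rw [h1, h2, Real.volume_Ioc]
    simp [measure_univ]
  rcases eq_or_lt_of_le hu with rfl | hu0
  · have h1 : G ⁻¹' Iic 0 = Iic 0 := by
      ext y
      simp only [mem_preimage, mem_Iic]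
      constructor
      · intro h
        by_contra hy
        exact absurd (lt_of_lt_of_le (hGpos y (not_le.mp hy)) h) (lt_irrefl 0)
      · intro h
        calc G y ≤ G 0 := hGmono h
          _ = 0 := hG0
    have h2 : Iic (0:ℝ) ∩ Ioc (0:ℝ) 1 = ∅ := by
      ext y
      simp only [mem_inter_iff, mem_Iic, mem_Ioc, mem_empty_iff_false, iff_false]
      rintro ⟨h3, h4, -⟩
      linarith
    rw [h1, h2, hμIic 0, hG0]
    simp
  · obtain ⟨c, hc0, hGc, habove⟩ := hexists u hu0 hu1
    have h1 : G ⁻¹' Iic u = Iic c := by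
      ext y
      simp only [mem_preimage, mem_Iic]
      constructor
      · intro h
        by_contra hy
        exact absurd (lt_of_lt_of_le (habove y (not_le.mp hy)) h) (lt_irrefl u)
      · intro h
        calc G y ≤ G c := hGmono h
          _ = u := hGc
    have h2 : Iic u ∩ Ioc (0:ℝ) 1 = Ioc 0 u := by
      ext y
      simp only [mem_inter_iff, mem_Iic, mem_Ioc]
      constructor
      · rintro ⟨h3, h4, -⟩
        exact ⟨h4, h3⟩
      · rintro ⟨h3, h4⟩
        exact ⟨h4, h3, le_trans h4 hu1.le⟩
    rw [h1, h2, hμIic c, hGc, Real.volume_Ioc, sub_zero]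


/-- Fractional generalized cumulative entropy of a distribution function `G`
over a set `S`. -/
noncomputable def fgceOn (G : ℝ → ℝ) (S : Set ℝ) (α : ℝ) : ℝ :=
  (1 / Real.Gamma (α + 1)) * ∫ x in S, G x * (-Real.log (G x)) ^ α

/-- The quantity `ℰ_θ(α) = (1/Γ(α)) E[ X_θ (−ln F_{X_θ}(X_θ))^{α−1} ]` for the
proportional reversed hazard model with baseline CDF `F` and parameter `θ`. -/
noncomputable def EthetaPRH {Ω : Type*} [MeasureSpace Ω]
    (Xθ : Ω → ℝ) (F : ℝ → ℝ) (θ α : ℝ) : ℝ :=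
  (1 / Real.Gamma α) * ∫ ω, Xθ ω * (-Real.log ((F (Xθ ω)) ^ θ)) ^ (α - 1) ∂ℙ

/-- under the proportional reversed hazard model `F_{X_θ} = F^θ`, where the
baseline CDF `F` is absolutely continuous (with density `f`) with support `(0,l)`, `l`
being finite or `+∞` with `x(−ln F(x))^β → 0` as `x → +∞` for the relevant orders, the
recurrence `CE_{α+1}(X_θ) = ℰ_θ(α) − ℰ_θ(α+2) − CE_α(X_θ)` holds for all `α > 0`. -/
theorem fgce_prhm_recurrence
    {Ω : Type*} [MeasureSpace Ω] [IsProbabilityMeasure (ℙ : Measure Ω)]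
    (F f : ℝ → ℝ) (l : EReal)
    (hl : (∃ lr : ℝ, 0 < lr ∧ l = (lr : EReal)) ∨ l = ⊤)
    (α θ : ℝ) (hα : 0 < α) (hθ : 0 < θ)
    (hlim : l = ⊤ → ∀ β : ℝ, 0 < β →
      Filter.Tendsto (fun x : ℝ => x * (-Real.log (F x)) ^ β) Filter.atTop (nhds 0))
    -- the baseline distribution is absolutely continuous with density `f`
    -- supported on `S = {x | 0 < x < l}`
    (hf_meas : Measurable f) (hf_nonneg : ∀ x, 0 ≤ f x)
    (hf_pos : ∀ x : ℝ, 0 < x → (x : EReal) < l → 0 < f x)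
    (hf_supp : ∀ x : ℝ, ¬ (0 < x ∧ (x : EReal) < l) → f x = 0)
    (hf_prob : ∫ x, f x = 1)
    (hF : ∀ x, F x = ∫ t in Set.Iio x, f t)
    -- the random variable `X_θ` with CDF `F^θ`
    (Xθ : Ω → ℝ) (hXθ : Measurable Xθ) (hXθnn : ∀ ω, 0 ≤ Xθ ω)
    (hcdf : ∀ x : ℝ, (ℙ {ω | Xθ ω ≤ x}).toReal = (F x) ^ θ) :
    fgceOn (fun x => (F x) ^ θ) {x : ℝ | 0 < x ∧ (x : EReal) < l} (α + 1)
      = EthetaPRH Xθ F θ α - EthetaPRH Xθ F θ (α + 2)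
        - fgceOn (fun x => (F x) ^ θ) {x : ℝ | 0 < x ∧ (x : EReal) < l} α := by
  classical
  obtain ⟨hf_int, hFmono, hF0, hF01, hFcont⟩ :=
    F_basics hl hf_meas hf_nonneg hf_pos hf_supp hf_prob hF
  obtain ⟨hFpos, hFlt1, hFstrict, hF1⟩ :=
    F_pos_block hl hf_int hf_nonneg hf_pos hf_supp hf_prob hF hFmono hF0
  have hsurj := F_surj_block hl hf_int hf_nonneg hf_prob hF hFcont hF0 hF1
  set S : Set ℝ := {x : ℝ | 0 < x ∧ (x : EReal) < l} with hSdef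
  set G : ℝ → ℝ := fun x => F x ^ θ with hGdef
  -- G facts
  have hGmono : Monotone G := fun a b hab =>
    Real.rpow_le_rpow (hF01 a).1 (hFmono hab) hθ.le
  have hG0 : G 0 = 0 := by
    show F 0 ^ θ = 0
    rw [hF0 0 le_rfl, Real.zero_rpow hθ.ne']
  have hGpos : ∀ y : ℝ, 0 < y → 0 < G y := fun y hy =>
    Real.rpow_pos_of_pos (hFpos y hy) θ
  have hG01 : ∀ y, 0 ≤ G y ∧ G y ≤ 1 := fun y =>
    ⟨Real.rpow_nonneg (hF01 y).1 θ, Real.rpow_le_one (hF01 y).1 (hF01 y).2 hθ.le⟩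
  have hGmeas : Measurable G :=
    (measurable_rpow_const' θ).comp hFcont.measurable
  have hGcont : Continuous G :=
    hFcont.rpow_const (fun x => Or.inr hθ.le)
  have hGx : ∀ x ∈ S, 0 < G x ∧ G x < 1 := fun x hx =>
    ⟨hGpos x hx.1, Real.rpow_lt_one (hF01 x).1 (hFlt1 x hx.2) hθ⟩
  have hlevel : ∀ x ∈ S, ∀ y, x < y ↔ G x < G y := by
    intro x hx y
    constructor
    · intro hxy
      by_cases hyl : (y : EReal) < l
      · exact Real.rpow_lt_rpow (hF01 x).1 (hFstrict x y hx.1.le hxy hyl.le) hθ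
      · rcases hl with ⟨lr, hlr, hlf⟩ | hlf
        · have hyle : lr ≤ y := by
            rw [hlf] at hyl
            exact_mod_cast not_lt.mp hyl
          have hFy : F y = 1 := hF1 lr hlf y hyle
          have : G y = 1 := by show F y ^ θ = 1; rw [hFy, Real.one_rpow]
          rw [this]
          exact (hGx x hx).2
        · rw [hlf] at hyl
          exact absurd (EReal.coe_lt_top y) hyl
    · intro h
      by_contra hxy
      exact absurd (hGmono (not_lt.mp hxy)) (not_le.mpr h)
  -- the set S
  have hSm : MeasurableSet S := by
    rcases hl with ⟨lr, hlr, hlf⟩ | hlf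
    · have : S = Ioo 0 lr := by
        ext x
        simp only [hSdef, mem_setOf_eq, mem_Ioo, hlf, EReal.coe_lt_coe_iff]
      rw [this]; exact measurableSet_Ioo
    · have : S = Ioi 0 := by
        ext x
        simp only [hSdef, mem_setOf_eq, mem_Ioi, hlf, EReal.coe_lt_top, and_true]
      rw [this]; exact measurableSet_Ioi
  have hS0 : ∀ y ∈ S, 0 < y := fun y hy => hy.1
  have hSIio : ∀ y ∈ S, S ∩ Iio y = Ioo 0 y := by
    intro y hy
    ext x
    simp only [hSdef, mem_inter_iff, mem_setOf_eq, mem_Iio, mem_Ioo]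
    constructor
    · rintro ⟨⟨h1, -⟩, h2⟩; exact ⟨h1, h2⟩
    · rintro ⟨h1, h2⟩
      exact ⟨⟨h1, lt_trans (EReal.coe_lt_coe_iff.mpr h2) hy.2⟩, h2⟩
  -- the pushforward measure
  set μ : Measure ℝ := Measure.map Xθ ℙ with hμdef
  haveI : IsProbabilityMeasure μ := Measure.isProbabilityMeasure_map hXθ.aemeasurable
  have hμIic : ∀ x, μ (Iic x) = ENNReal.ofReal (G x) := by
    intro x
    rw [hμdef, Measure.map_apply hXθ measurableSet_Iic]
    have h1 : Xθ ⁻¹' Iic x = {ω | Xθ ω ≤ x} := rfl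
    have h2 : G x = (ℙ {ω | Xθ ω ≤ x}).toReal := (hcdf x).symm
    rw [h1, h2, ENNReal.ofReal_toReal (measure_ne_top _ _)]
  have hμae : ∀ᵐ y ∂μ, y ∈ S := by
    have hμIic0 : μ (Iic 0) = 0 := by
      rw [hμIic 0, hG0, ENNReal.ofReal_zero]
    rw [MeasureTheory.ae_iff]
    have hset : {y : ℝ | ¬ y ∈ S} = Sᶜ := rfl
    rw [hset]
    rcases hl with ⟨lr, hlr, hlf⟩ | hlf
    · have hSeq : S = Ioo 0 lr := by
        ext x
        simp only [hSdef, mem_setOf_eq, mem_Ioo, hlf, EReal.coe_lt_coe_iff]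
      have hIci : μ (Ici lr) = 0 := by
        have hG1 : G lr = 1 := by
          show F lr ^ θ = 1
          rw [hF1 lr hlf lr le_rfl, Real.one_rpow]
        have hbound : ∀ n : ℕ, μ (Ici lr) ≤ ENNReal.ofReal (1 - G (lr - 1/(n+1))) := by
          intro n
          set x : ℝ := lr - 1/(n+1) with hxdef
          have hxlr : x < lr := by
            rw [hxdef]
            have : (0:ℝ) < 1/(n+1) := by positivity
            linarith
          have h1 : μ (Ici lr) ≤ μ (Ioi x) :=
            measure_mono (fun y hy => lt_of_lt_of_le hxlr hy)
          have h2 : μ (Ioi x) = ENNReal.ofReal (1 - G x) := by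
            rw [← Set.compl_Iic, measure_compl measurableSet_Iic (measure_ne_top _ _),
              measure_univ, hμIic x, ENNReal.ofReal_sub _ (hG01 x).1, ENNReal.ofReal_one]
          rw [← h2]
          exact h1
        have htendR : Filter.Tendsto (fun n : ℕ => 1 - G (lr - 1/(n+1)))
            Filter.atTop (nhds 0) := by
          have h1 : Filter.Tendsto (fun n : ℕ => lr - 1/(n+1)) Filter.atTop (nhds lr) := by
            have := tendsto_one_div_add_atTop_nhds_zero_nat (𝕜 := ℝ)
            have h2 := Filter.Tendsto.const_sub lr this
            simpa using h2
          have h3 := (hGcont.tendsto lr).comp h1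
          have h4 := Filter.Tendsto.const_sub 1 h3
          rw [hG1] at h4
          simpa using h4
        have htend : Filter.Tendsto (fun n : ℕ => ENNReal.ofReal (1 - G (lr - 1/(n+1))))
            Filter.atTop (nhds 0) := by
          have := ENNReal.tendsto_ofReal htendR
          rwa [ENNReal.ofReal_zero] at this
        exact le_antisymm (ge_of_tendsto' htend hbound) (zero_le')
      have hsub : Sᶜ ⊆ Iic 0 ∪ Ici lr := by
        intro y hy
        rw [hSeq] at hy
        simp only [mem_compl_iff, mem_Ioo, not_and, not_lt] at hy
        rcases le_or_gt y 0 with h | h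
        · exact Or.inl h
        · exact Or.inr (hy h)
      refine le_antisymm (le_trans (measure_mono hsub) ?_) (zero_le')
      refine le_trans (measure_union_le _ _) ?_
      rw [hμIic0, hIci, add_zero]
    · have hSeq : S = Ioi 0 := by
        ext x
        simp only [hSdef, mem_setOf_eq, mem_Ioi, hlf, EReal.coe_lt_top, and_true]
      rw [hSeq, compl_Ioi, hμIic0]
  have hmap : Measure.map G μ = (volume : Measure ℝ).restrict (Ioc 0 1) := by
    refine map_G_eq G μ hGmeas hGmono hG0 hGpos hG01 hμIic ?_
    intro u hu0 hu1
    obtain ⟨c, hc0, hcl, hFc⟩ := hsurj (u ^ θ⁻¹) (Real.rpow_pos_of_pos hu0 _)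
      (Real.rpow_lt_one hu0.le hu1 (inv_pos.mpr hθ))
    have hGc : G c = u := by
      show F c ^ θ = u
      rw [hFc, ← Real.rpow_mul hu0.le, inv_mul_cancel₀ hθ.ne', Real.rpow_one]
    have hcS : c ∈ S := ⟨hc0, hcl⟩
    refine ⟨c, hc0, hGc, fun y hy => ?_⟩
    rw [← hGc]
    exact (hlevel c hcS y).mp hy
  -- integrability
  have hqmeas : ∀ γ : ℝ, Measurable (fun y => (-Real.log (G y)) ^ γ) :=
    fun γ => (measurable_rpow_const' γ).comp (hGmeas.log.neg)
  have hqnn : ∀ γ : ℝ, ∀ y : ℝ, 0 ≤ (-Real.log (G y)) ^ γ := fun γ y =>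
    Real.rpow_nonneg (by simpa using Real.log_nonpos (hG01 y).1 (hG01 y).2) _
  have qi : ∀ γ : ℝ, -1 < γ → Integrable (fun y => (-Real.log (G y)) ^ γ) μ := by
    intro γ hγ
    have h1 : Integrable (fun u : ℝ => (-Real.log u) ^ γ) (Measure.map G μ) := by
      rw [hmap]; exact neglog_integrable hγ
    exact (integrable_map_measure ((measurable_rpow_const' γ).comp
      Real.measurable_log.neg).aestronglyMeasurable hGmeas.aemeasurable).mp h1
  have Mall : ∀ γ : ℝ, -1 < γ → Integrable (fun y => y * (-Real.log (G y)) ^ γ) μ := by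
    intro γ hγ
    have haesm : AEStronglyMeasurable (fun y => y * (-Real.log (G y)) ^ γ) μ :=
      (measurable_id.mul (hqmeas γ)).aestronglyMeasurable
    rcases hl with ⟨lr, hlr, hlf⟩ | hlf
    · refine Integrable.mono' ((qi γ hγ).const_mul lr) haesm ?_
      filter_upwards [hμae] with y hy
      have hylr : y < lr := by
        have h2 := hy.2
        rw [hlf] at h2
        exact_mod_cast h2
      rw [Real.norm_eq_abs, abs_of_nonneg (mul_nonneg hy.1.le (hqnn γ y))]
      exact mul_le_mul_of_nonneg_right hylr.le (hqnn γ y)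
    · set β' : ℝ := (γ + 1)/2 with hβ'
      have hβ'pos : 0 < β' := by rw [hβ']; linarith
      have hγβ' : -1 < γ - β' := by rw [hβ']; linarith
      have htend := hlim hlf β' hβ'pos
      have hev : ∀ᶠ x : ℝ in Filter.atTop, x * (-Real.log (F x)) ^ β' < 1 :=
        htend.eventually (gt_mem_nhds one_pos)
      obtain ⟨A, hA⟩ := Filter.eventually_atTop.mp hev
      set C : ℝ := θ ^ γ * (θ⁻¹) ^ (γ - β') with hC
      have hCnn : 0 ≤ C :=
        mul_nonneg (Real.rpow_nonneg hθ.le _) (Real.rpow_nonneg (by positivity) _)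
      refine Integrable.mono' (((qi γ hγ).const_mul (max A 1)).add
        ((qi (γ - β') hγβ').const_mul C)) haesm ?_
      filter_upwards [hμae] with y hy
      have hFy0 : 0 < F y := hFpos y hy.1
      have hFy1 : F y < 1 := hFlt1 y (by rw [hlf]; exact EReal.coe_lt_top y)
      have hlogF : 0 < -Real.log (F y) := by
        simpa using neg_pos.mpr (Real.log_neg hFy0 hFy1)
      have hlogG : -Real.log (G y) = θ * (-Real.log (F y)) := by
        show -Real.log (F y ^ θ) = _
        rw [Real.log_rpow hFy0]; ring
      have hq1 := hqnn γ y
      have hq2 := hqnn (γ - β') y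
      have hmax1 : (0:ℝ) < max A 1 := lt_of_lt_of_le one_pos (le_max_right A 1)
      rw [Real.norm_eq_abs, abs_of_nonneg (mul_nonneg hy.1.le hq1)]
      simp only [Pi.add_apply]
      rcases le_or_gt y (max A 1) with hyA | hyA
      · have h1 : y * (-Real.log (G y)) ^ γ ≤ max A 1 * (-Real.log (G y)) ^ γ :=
          mul_le_mul_of_nonneg_right hyA hq1
        nlinarith [mul_nonneg hCnn hq2]
      · have hAy := hA y (le_trans (le_max_left A 1) hyA.le)
        have hfactnn : 0 ≤ y * (-Real.log (F y)) ^ β' :=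
          mul_nonneg (hy.1.le) (Real.rpow_nonneg hlogF.le _)
        have e1 : (-Real.log (F y)) ^ β' * (-Real.log (F y)) ^ (γ - β')
            = (-Real.log (F y)) ^ γ := by
          rw [← Real.rpow_add hlogF, show β' + (γ - β') = γ from by ring]
        have hkey : y * (-Real.log (G y)) ^ γ
            = θ ^ γ * (y * (-Real.log (F y)) ^ β') * (-Real.log (F y)) ^ (γ - β') := by
          rw [hlogG, Real.mul_rpow hθ.le hlogF.le, ← e1]; ring
        have h2 : θ ^ γ * (y * (-Real.log (F y)) ^ β') * (-Real.log (F y)) ^ (γ - β')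
            ≤ θ ^ γ * 1 * (-Real.log (F y)) ^ (γ - β') := by
          refine mul_le_mul_of_nonneg_right ?_ (Real.rpow_nonneg hlogF.le _)
          exact mul_le_mul_of_nonneg_left hAy.le (Real.rpow_nonneg hθ.le _)
        have e2 : (-Real.log (F y)) ^ (γ - β')
            = θ⁻¹ ^ (γ - β') * (-Real.log (G y)) ^ (γ - β') := by
          rw [hlogG, ← Real.mul_rpow (by positivity) (by positivity),
            show θ⁻¹ * (θ * -Real.log (F y)) = -Real.log (F y) from by field_simp]
        have h3 : θ ^ γ * 1 * (-Real.log (F y)) ^ (γ - β')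
            = C * (-Real.log (G y)) ^ (γ - β') := by
          rw [e2, hC]; ring
        nlinarith [mul_nonneg hmax1.le hq1, hkey, h2, h3]
  -- the two key identities
  have K1 := key_identity hSm hGmeas hG01 hGx hlevel hμae hSIio hS0 hmap hα
    (Mall (α - 1) (by linarith)) (Mall α (by linarith))
  have K2 := key_identity hSm hGmeas hG01 hGx hlevel hμae hSIio hS0 hmap
    (by linarith : (0:ℝ) < α + 1)
    (Mall (α + 1 - 1) (by linarith))
    (Mall (α + 1) (by linarith))
  -- transfer μ-integrals to ℙ-expectations
  have htrans : ∀ γ : ℝ, (∫ y, y * (-Real.log (G y)) ^ γ ∂μ)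
      = ∫ ω, Xθ ω * (-Real.log ((F (Xθ ω)) ^ θ)) ^ γ ∂ℙ := by
    intro γ
    rw [hμdef, integral_map hXθ.aemeasurable
      (f := fun y => y * (-Real.log (G y)) ^ γ)
      (measurable_id'.mul (hqmeas γ)).aestronglyMeasurable]
  have he1 : (α + 1 - 1 : ℝ) = α := by ring
  rw [he1] at K2
  simp only [fgceOn, EthetaPRH]
  rw [show (α + 2 - 1 : ℝ) = α + 1 from by ring, ← htrans (α - 1), ← htrans (α + 1),
    K1, K2]
  have hΓα : 0 < Real.Gamma α := Real.Gamma_pos_of_pos hα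
  have hg1 : Real.Gamma (α + 1) = α * Real.Gamma α := Real.Gamma_add_one hα.ne'
  have hg2 : Real.Gamma (α + 2) = (α + 1) * Real.Gamma (α + 1) := by
    rw [show (α + 2 : ℝ) = (α + 1) + 1 from by ring,
      Real.Gamma_add_one (by linarith : (α + 1 : ℝ) ≠ 0)]
  rw [show (α + 1 + 1 : ℝ) = α + 2 from by ring, hg2, hg1]
  field_simp
  ring
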